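/- Let n, p be positive integers and q ≥ 2 an even integer, let Y ∈ ℝ^n, X ∈ ℝ^{n×p}, and let β ∈ ℝ^p be such that u := Xᵀ(Y − Xβ) ≠ 0. Define the smooth data-fitting term L̄(β) = ‖Y − Xβ‖₂² / ((1/2)‖Xᵀ(Y − Xβ)‖_q), where ‖a‖_q = (Σⱼ aⱼ^q)^{1/q} for even q. Then L̄ is differentiable at β with gradient ∇L̄(β) = 2‖Y − Xβ‖₂² · XᵀX u^{∘(q−1)} / ‖u‖_q^{q+1} − 4 Xᵀ(Y − Xβ) / ‖u‖_q, where u^{∘(q−1)} ∈ ℝ^p denotes the entrywise (q−1)-th power of u. -/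

import Mathlib

open Matrix Finset

/-- Gradient of the smooth TREX data-fitting term: for even `q ≥ 2` and
`u = Xᵀ(Y − Xβ) ≠ 0`, the map `b ↦ ‖Y − Xb‖₂² / ((1/2)‖Xᵀ(Y − Xb)‖_q)`
(with `‖a‖_q = (Σⱼ aⱼ^q)^{1/q}`) is differentiable at `β` with gradient
`2‖Y − Xβ‖₂² · XᵀX u^{∘(q−1)} / ‖u‖_q^{q+1} − 4 Xᵀ(Y − Xβ) / ‖u‖_q`. -/
theorem trex_smooth_gradient
    (n p q : ℕ) (hn : 0 < n) (hp : 0 < p) (hq2 : 2 ≤ q) (hq_even : Even q)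
    (Y : Fin n → ℝ) (X : Matrix (Fin n) (Fin p) ℝ)
    (β : EuclideanSpace ℝ (Fin p))
    (hu : Xᵀ.mulVec (Y - X.mulVec β) ≠ 0) :
    HasGradientAt
      (fun b : EuclideanSpace ℝ (Fin p) =>
        (∑ i, (Y i - X.mulVec b i) ^ 2) /
          ((1 / 2) * (∑ j, (Xᵀ.mulVec (Y - X.mulVec b) j) ^ q) ^ ((1 : ℝ) / q)))
      (WithLp.toLp 2 (fun j =>
          2 * (∑ i, (Y i - X.mulVec β i) ^ 2) *
              ((Xᵀ * X).mulVec
                (fun k => (Xᵀ.mulVec (Y - X.mulVec β) k) ^ (q - 1))) j /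
              ((∑ k, (Xᵀ.mulVec (Y - X.mulVec β) k) ^ q) ^ ((1 : ℝ) / q)) ^ (q + 1)
            - 4 * Xᵀ.mulVec (Y - X.mulVec β) j /
              ((∑ k, (Xᵀ.mulVec (Y - X.mulVec β) k) ^ q) ^ ((1 : ℝ) / q))) :
        EuclideanSpace ℝ (Fin p))
      β := by
  classical
  -- basic objects
  set u0 : Fin p → ℝ := Xᵀ.mulVec (Y - X.mulVec β) with hu0
  set G : ℝ := ∑ k, (u0 k) ^ q with hG_def
  set s : ℝ := G ^ ((1 : ℝ) / q) with hs_def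
  set f0 : ℝ := ∑ i, (Y i - X.mulVec β i) ^ 2 with hf0_def
  have hq0 : (q : ℝ) ≠ 0 := Nat.cast_ne_zero.mpr (by omega)
  -- positivity of G
  have hG : 0 < G := by
    obtain ⟨k, hk⟩ := Function.ne_iff.mp hu
    exact Finset.sum_pos' (fun k _ => hq_even.pow_nonneg _)
      ⟨k, Finset.mem_univ k, hq_even.pow_pos (by simpa using hk)⟩
  have hs : 0 < s := Real.rpow_pos_of_pos hG _
  -- coordinate projections
  have hproj : ∀ k : Fin p, HasFDerivAt (fun b : EuclideanSpace ℝ (Fin p) => b k)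
      (EuclideanSpace.proj k : EuclideanSpace ℝ (Fin p) →L[ℝ] ℝ) β := by
    intro k
    show HasFDerivAt (⇑(EuclideanSpace.proj (𝕜 := ℝ) k)) _ _
    exact ContinuousLinearMap.hasFDerivAt _
  -- derivative of b ↦ (X b) i
  set L : Fin n → (EuclideanSpace ℝ (Fin p) →L[ℝ] ℝ) :=
    fun i => ∑ k, X i k • (EuclideanSpace.proj k : EuclideanSpace ℝ (Fin p) →L[ℝ] ℝ) with hL_def
  have hL : ∀ i, HasFDerivAt (fun b : EuclideanSpace ℝ (Fin p) => X.mulVec b i) (L i) β := by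
    intro i
    have : (fun b : EuclideanSpace ℝ (Fin p) => X.mulVec b i) = fun b : EuclideanSpace ℝ (Fin p) => ∑ k, X i k * b k := by
      funext b; simp [Matrix.mulVec, dotProduct]
    rw [this]
    exact HasFDerivAt.fun_sum fun k _ => (hproj k).const_mul (X i k)
  have hr : ∀ i, HasFDerivAt (fun b : EuclideanSpace ℝ (Fin p) => Y i - X.mulVec b i) (-(L i)) β :=
    fun i => (hL i).const_sub (Y i)
  -- derivative of the numerator
  have hf : HasFDerivAt (fun b : EuclideanSpace ℝ (Fin p) => ∑ i, (Y i - X.mulVec b i) ^ 2)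
      (∑ i, (((2 : ℕ) : ℝ) * (Y i - X.mulVec β i) ^ (2 - 1)) • (-(L i))) β :=
    HasFDerivAt.fun_sum fun i _ =>
      by have h := (hasDerivAt_pow 2 (Y i - X.mulVec β i)).comp_hasFDerivAt β (hr i); exact h
  -- derivative of b ↦ u(b) j
  set M : Fin p → (EuclideanSpace ℝ (Fin p) →L[ℝ] ℝ) := fun j => ∑ i, X i j • (-(L i)) with hM_def
  have hUj : ∀ j, HasFDerivAt (fun b : EuclideanSpace ℝ (Fin p) => Xᵀ.mulVec (Y - X.mulVec b) j) (M j) β := by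
    intro j
    have : (fun b : EuclideanSpace ℝ (Fin p) => Xᵀ.mulVec (Y - X.mulVec b) j)
        = fun b : EuclideanSpace ℝ (Fin p) => ∑ i, X i j * (Y i - X.mulVec b i) := by
      funext b; simp [Matrix.mulVec, dotProduct, Matrix.transpose_apply]
    rw [this]
    exact HasFDerivAt.fun_sum fun i _ => (hr i).const_mul (X i j)
  -- derivative of g
  have hg : HasFDerivAt (fun b : EuclideanSpace ℝ (Fin p) => ∑ j, (Xᵀ.mulVec (Y - X.mulVec b) j) ^ q)
      (∑ j, (((q : ℕ) : ℝ) * (Xᵀ.mulVec (Y - X.mulVec β) j) ^ (q - 1)) • (M j)) β :=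
    HasFDerivAt.fun_sum fun j _ =>
      (hasDerivAt_pow q (Xᵀ.mulVec (Y - X.mulVec β) j)).comp_hasFDerivAt β (hUj j)
  have hgβ : (∑ j, (Xᵀ.mulVec (Y - X.mulVec β) j) ^ q) = G := rfl
  -- rpow
  have hh : HasFDerivAt (fun b : EuclideanSpace ℝ (Fin p) => (∑ j, (Xᵀ.mulVec (Y - X.mulVec b) j) ^ q) ^ ((1:ℝ)/q))
      ((((1:ℝ)/q) * G ^ ((1:ℝ)/q - 1)) •
        (∑ j, (((q : ℕ) : ℝ) * (Xᵀ.mulVec (Y - X.mulVec β) j) ^ (q - 1)) • (M j))) β := by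
    have := hg.rpow_const (p := (1:ℝ)/q) (Or.inl (by rw [hgβ]; exact hG.ne'))
    rwa [hgβ] at this
  -- denominator
  have hd : HasFDerivAt
      (fun b : EuclideanSpace ℝ (Fin p) => (1/2 : ℝ) * (∑ j, (Xᵀ.mulVec (Y - X.mulVec b) j) ^ q) ^ ((1:ℝ)/q))
      ((1/2 : ℝ) • ((((1:ℝ)/q) * G ^ ((1:ℝ)/q - 1)) •
        (∑ j, (((q : ℕ) : ℝ) * (Xᵀ.mulVec (Y - X.mulVec β) j) ^ (q - 1)) • (M j)))) β :=
    hh.const_mul _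
  have hd0 : ((1/2 : ℝ) * s) ≠ 0 := by positivity
  have hdβ : ((1/2 : ℝ) * (∑ j, (Xᵀ.mulVec (Y - X.mulVec β) j) ^ q) ^ ((1:ℝ)/q)) = (1/2 : ℝ) * s := rfl
  have hinv : HasFDerivAt
      (fun b : EuclideanSpace ℝ (Fin p) => ((1/2 : ℝ) * (∑ j, (Xᵀ.mulVec (Y - X.mulVec b) j) ^ q) ^ ((1:ℝ)/q))⁻¹)
      ((-(((1/2 : ℝ) * s) ^ 2)⁻¹) • ((1/2 : ℝ) • ((((1:ℝ)/q) * G ^ ((1:ℝ)/q - 1)) •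
        (∑ j, (((q : ℕ) : ℝ) * (Xᵀ.mulVec (Y - X.mulVec β) j) ^ (q - 1)) • (M j))))) β := by
    refine HasDerivAt.comp_hasFDerivAt β ?_ hd
    exact hasDerivAt_inv hd0
  have hF := hf.mul hinv
  rw [hasGradientAt_iff_hasFDerivAt]
  have hfun : (fun b : EuclideanSpace ℝ (Fin p) =>
        (∑ i, (Y i - X.mulVec b i) ^ 2) /
          ((1 / 2) * (∑ j, (Xᵀ.mulVec (Y - X.mulVec b) j) ^ q) ^ ((1 : ℝ) / q)))
      = fun b : EuclideanSpace ℝ (Fin p) =>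
        (∑ i, (Y i - X.mulVec b i) ^ 2) *
          ((1 / 2 : ℝ) * (∑ j, (Xᵀ.mulVec (Y - X.mulVec b) j) ^ q) ^ ((1 : ℝ) / q))⁻¹ :=
    funext fun b => div_eq_mul_inv _ _
  rw [hfun]
  refine hF.congr_fderiv ?_
  ext v
  simp only [ContinuousLinearMap.add_apply, ContinuousLinearMap.smul_apply,
    ContinuousLinearMap.coe_sum', Finset.sum_apply, ContinuousLinearMap.neg_apply,
    smul_eq_mul, InnerProductSpace.toDual_apply_apply,
    PiLp.inner_apply, RCLike.inner_apply, conj_trivial]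
  have hLv : ∀ i, (L i) v = (X *ᵥ v) i := by
    intro i
    simp [hL_def, Matrix.mulVec, dotProduct, PiLp.proj_apply]
  have hMv : ∀ j, (M j) v = -∑ i, X i j * (X *ᵥ v) i := by
    intro j
    simp [hM_def, hLv, Finset.sum_neg_distrib, mul_comm]
  -- inner-product identities
  have hP : ∑ i, (Y i - (X *ᵥ β) i) * (X *ᵥ v) i = ∑ k, u0 k * v k := by
    have h1 : ∀ i ∈ Finset.univ, (Y i - (X *ᵥ β) i) * (X *ᵥ v) i
        = ∑ k, (Y i - (X *ᵥ β) i) * (X i k * v k) := fun i _ => by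
      simp [Matrix.mulVec, dotProduct, Finset.mul_sum]
    rw [Finset.sum_congr rfl h1, Finset.sum_comm]
    refine Finset.sum_congr rfl fun k _ => ?_
    rw [hu0]
    simp only [Matrix.mulVec, dotProduct, Matrix.transpose_apply, Pi.sub_apply]
    rw [Finset.sum_mul]
    exact Finset.sum_congr rfl fun i _ => by ring
  have hQ : ∑ j, (Xᵀ *ᵥ (Y - X *ᵥ β)) j ^ (q - 1) * ∑ i, X i j * (X *ᵥ v) i
      = ∑ k, ((Xᵀ * X) *ᵥ fun k => u0 k ^ (q - 1)) k * v k := by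
    have h1 : ∀ j ∈ Finset.univ, (Xᵀ *ᵥ (Y - X *ᵥ β)) j ^ (q - 1) * ∑ i, X i j * (X *ᵥ v) i
        = ∑ k, ∑ i, u0 j ^ (q - 1) * (X i j * (X i k * v k)) := fun j _ => by
      rw [← hu0, Finset.sum_comm]
      simp [Matrix.mulVec, dotProduct, Finset.mul_sum]
    have h2 : ∀ k ∈ Finset.univ, ((Xᵀ * X) *ᵥ fun k => u0 k ^ (q - 1)) k * v k
        = ∑ j, ∑ i, u0 j ^ (q - 1) * (X i j * (X i k * v k)) := fun k _ => by
      simp only [Matrix.mulVec, dotProduct, Matrix.mul_apply, Matrix.transpose_apply]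
      rw [Finset.sum_mul]
      refine Finset.sum_congr rfl fun j _ => ?_
      rw [Finset.sum_mul, Finset.sum_mul]
      exact Finset.sum_congr rfl fun i _ => by ring
    rw [Finset.sum_congr rfl h1, Finset.sum_congr rfl h2, Finset.sum_comm]
  -- evaluate the two directional sums
  have hSB : ∑ x, ((2:ℕ):ℝ) * (Y x - (X *ᵥ β) x) ^ (2 - 1) * -((L x) v)
      = -(2 * ∑ k, u0 k * v k) := by
    rw [← hP, Finset.mul_sum, ← Finset.sum_neg_distrib]
    exact Finset.sum_congr rfl fun x _ => by rw [hLv]; push_cast; ring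
  have hSA : ∑ x, ((q:ℕ):ℝ) * (Xᵀ *ᵥ (Y - X *ᵥ β)) x ^ (q - 1) * (M x) v
      = -((q:ℝ) * ∑ k, ((Xᵀ * X) *ᵥ fun k => u0 k ^ (q - 1)) k * v k) := by
    rw [← hQ, Finset.mul_sum, ← Finset.sum_neg_distrib]
    refine Finset.sum_congr rfl fun x _ => ?_
    rw [hMv]
    ring
  rw [hSA, hSB, hgβ, ← hf0_def]
  -- split the right-hand side
  have hRHS : ∑ x, (2 * f0 * ((Xᵀ * X) *ᵥ fun k => u0 k ^ (q - 1)) x / s ^ (q + 1)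
        - 4 * u0 x / s) * v x
      = 2 * f0 / s ^ (q + 1) * (∑ k, ((Xᵀ * X) *ᵥ fun k => u0 k ^ (q - 1)) k * v k)
        - 4 / s * (∑ k, u0 k * v k) := by
    have h1 : ∀ x ∈ Finset.univ, (2 * f0 * ((Xᵀ * X) *ᵥ fun k => u0 k ^ (q - 1)) x / s ^ (q + 1)
          - 4 * u0 x / s) * v x
        = 2 * f0 / s ^ (q + 1) * (((Xᵀ * X) *ᵥ fun k => u0 k ^ (q - 1)) x * v x)
          - 4 / s * (u0 x * v x) := fun x _ => by ring
    rw [Finset.sum_congr rfl h1, Finset.sum_sub_distrib, ← Finset.mul_sum, ← Finset.mul_sum]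
  simp only [mul_comm (v.ofLp _)]
  rw [hRHS]
  -- rpow algebra
  have hone : ((1:ℝ)/q) * q = 1 := by field_simp
  have hsq : s ^ q = G := by
    rw [hs_def, ← Real.rpow_natCast (G ^ ((1:ℝ)/q)) q, ← Real.rpow_mul hG.le, hone,
      Real.rpow_one]
  have hGs : G ^ ((1:ℝ)/q - 1) = s / G := by
    rw [Real.rpow_sub hG, Real.rpow_one, ← hs_def]
  have hsq1 : s ^ (q + 1) = G * s := by rw [pow_succ, hsq]
  rw [hGs, hsq1]
  field_simp
  ring
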